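/- Every orbit of GL_d(R) under the action of GL_d(Z) by right multiplication contains a matrix with all positive entries. -/

import Mathlib

/-- Every orbit of `GL_d(ℝ)` under the right-multiplication action of `GL_d(ℤ)`
contains a matrix with all positive entries. -/
theorem orbit_contains_positive_matrix (d : ℕ)
    (A : Matrix (Fin d) (Fin d) ℝ) (hA : IsUnit A.det) :
    ∃ U : Matrix (Fin d) (Fin d) ℤ, IsUnit U.det ∧
      ∀ i j, 0 < (A * U.map (Int.cast : ℤ → ℝ)) i j := by
  rcases Nat.eq_zero_or_pos d with hd | hd
  · subst hd
    exact ⟨1, by simp, fun i => i.elim0⟩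
  -- a real vector x with A x = 1 (all ones)
  set x : Fin d → ℝ := A⁻¹.mulVec 1 with hxdef
  have hx : A.mulVec x = 1 := by
    rw [hxdef, Matrix.mulVec_mulVec, Matrix.mul_nonsing_inv A hA, Matrix.one_mulVec]
  -- a big scaling factor
  set t : ℝ := 1 + ∑ i, ∑ j, |A i j| with ht
  have ht1 : 1 ≤ t := by
    have : (0:ℝ) ≤ ∑ i, ∑ j, |A i j| :=
      Finset.sum_nonneg fun i _ => Finset.sum_nonneg fun j _ => abs_nonneg _
    linarith
  have habs : ∀ i j, |A i j| ≤ t - 1 := by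
    intro i j
    have h1 : |A i j| ≤ ∑ j, |A i j| :=
      Finset.single_le_sum (fun j _ => abs_nonneg (A i j)) (Finset.mem_univ j)
    have h2 : (∑ j, |A i j|) ≤ ∑ i, ∑ j, |A i j| :=
      Finset.single_le_sum (f := fun i => ∑ j, |A i j|)
        (fun i _ => Finset.sum_nonneg fun j _ => abs_nonneg _) (Finset.mem_univ i)
    simp only [ht]; linarith
  -- the integer vector w, with A w entrywise ≥ 1
  set w : Fin d → ℤ := fun j => ⌊t * x j⌋ with hwdef
  have hfloor : ∀ j, |(w j : ℝ) - t * x j| ≤ 1 := by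
    intro j
    have h1 := Int.floor_le (t * x j)
    have h2 := Int.sub_one_lt_floor (t * x j)
    rw [abs_le]; constructor <;> simp only [hwdef] <;> linarith
  have hAW : ∀ i, 1 ≤ ∑ k, A i k * (w k : ℝ) := by
    intro i
    have hx1 : ∑ k, A i k * x k = 1 := by
      have := congrFun hx i
      simpa [Matrix.mulVec, dotProduct] using this
    have e1 : ∑ k, A i k * (t * x k) = t := by
      rw [show (∑ k, A i k * (t * x k)) = t * ∑ k, A i k * x k by
        rw [Finset.mul_sum]; exact Finset.sum_congr rfl fun k _ => by ring]
      rw [hx1, mul_one]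
    have e2 : |∑ k, A i k * ((w k : ℝ) - t * x k)| ≤ t - 1 := by
      calc |∑ k, A i k * ((w k : ℝ) - t * x k)|
          ≤ ∑ k, |A i k * ((w k : ℝ) - t * x k)| := Finset.abs_sum_le_sum_abs _ _
        _ ≤ ∑ k, |A i k| := by
            refine Finset.sum_le_sum fun k _ => ?_
            rw [abs_mul]
            exact mul_le_of_le_one_right (abs_nonneg _) (hfloor k)
        _ ≤ t - 1 := by
            have h2 : (∑ k, |A i k|) ≤ ∑ i, ∑ j, |A i j| :=
              Finset.single_le_sum (f := fun i => ∑ j, |A i j|)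
                (fun i _ => Finset.sum_nonneg fun j _ => abs_nonneg _) (Finset.mem_univ i)
            simp only [ht]; linarith
    have e3 : ∑ k, A i k * (w k : ℝ)
        = (∑ k, A i k * (t * x k)) + ∑ k, A i k * ((w k : ℝ) - t * x k) := by
      rw [← Finset.sum_add_distrib]
      exact Finset.sum_congr rfl fun k _ => by ring
    rw [e3, e1]
    have := (abs_le.mp e2).1
    linarith
  -- w is nonzero
  have hw0 : ∃ j0, w j0 ≠ 0 := by
    by_contra h
    push_neg at h
    have := hAW ⟨0, hd⟩
    simp only [h, Int.cast_zero, mul_zero, Finset.sum_const_zero] at this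
    linarith
  obtain ⟨j0, hj0⟩ := hw0
  -- the combinatorial data
  obtain ⟨N, hN⟩ := exists_nat_ge t
  set σ : ℤ := if 0 < w j0 then 1 else -1 with hσ
  have hσw : σ * w j0 = |w j0| := by
    rcases lt_trichotomy (w j0) 0 with h | h | h
    · simp only [hσ, if_neg (not_lt.mpr h.le)]
      rw [abs_of_neg h]; ring
    · exact absurd h hj0
    · simp only [hσ, if_pos h]
      rw [abs_of_pos h]; ring
  set s : ℤ := ∑ j ∈ Finset.univ.erase j0, |w j| with hs
  have hs0 : 0 ≤ s := Finset.sum_nonneg fun j _ => abs_nonneg _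
  set ε : Fin d → ℤ := fun j =>
    if j = j0 then (if s = 0 then σ else -σ) else (if 0 ≤ w j then 1 else -1) with hε
  set n : Fin d → ℤ := fun j => if j = j0 then (N : ℤ) * s else (N : ℤ) * |w j0| with hn
  have hε1 : ∀ j, ε j = 1 ∨ ε j = -1 := by
    intro j
    simp only [hε, hσ]
    split_ifs <;> simp
  have hε2 : ∀ j, ε j * ε j = 1 := by
    intro j
    rcases hε1 j with h | h <;> rw [h] <;> ring
  set U : Matrix (Fin d) (Fin d) ℤ :=
    Matrix.of fun k j => (if k = j then ε j else 0) + n j * w k with hU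
  -- determinant computation
  have hsum : ∑ j, (n j * ε j) * w j = 0 := by
    rw [← Finset.sum_erase_add _ _ (Finset.mem_univ j0)]
    have h1 : ∑ j ∈ Finset.univ.erase j0, (n j * ε j) * w j = (N : ℤ) * |w j0| * s := by
      rw [hs, Finset.mul_sum]
      refine Finset.sum_congr rfl fun j hj => ?_
      have hjne : j ≠ j0 := Finset.ne_of_mem_erase hj
      simp only [hn, hε, if_neg hjne]
      split_ifs with h
      · rw [abs_of_nonneg h]; ring
      · rw [abs_of_neg (lt_of_not_ge h)]; ring
    rw [h1]
    by_cases hcase : s = 0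
    · simp [hn, hε, hcase]
    · have h2 : (n j0 * ε j0) * w j0 = -((N : ℤ) * |w j0| * s) := by
        simp only [hn, hε, if_pos rfl, if_neg hcase]
        linear_combination (-((N : ℤ) * s)) * hσw
      rw [h2]; ring
  have hdet : U.det = ∏ j, ε j := by
    have hfac : U = (1 + Matrix.replicateCol Unit w * Matrix.replicateRow Unit (fun j => n j * ε j))
        * Matrix.diagonal ε := by
      ext k j
      rw [Matrix.mul_diagonal]
      simp only [hU, Matrix.of_apply, Matrix.add_apply, Matrix.one_apply, Matrix.mul_apply,
        Matrix.replicateCol, Matrix.replicateRow, Finset.univ_unique, Finset.sum_singleton, Matrix.of_apply]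
      split_ifs with h
      · linear_combination (-(w k * n j)) * hε2 j
      · linear_combination (-(w k * n j)) * hε2 j
    rw [hfac, Matrix.det_mul, Matrix.det_diagonal, Matrix.det_one_add_replicateCol_mul_replicateRow,
      show dotProduct (fun j => n j * ε j) w = 0 from by
        simpa [dotProduct] using hsum]
    ring
  have hdetunit : IsUnit U.det := by
    refine IsUnit.of_mul_eq_one (∏ j, ε j) ?_
    rw [hdet, ← Finset.prod_mul_distrib]
    exact Finset.prod_eq_one fun j _ => hε2 j
  refine ⟨U, hdetunit, fun i j => ?_⟩
  -- expand the product entry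
  have expand : (A * U.map (Int.cast : ℤ → ℝ)) i j
      = (ε j : ℝ) * A i j + (n j : ℝ) * ∑ k, A i k * (w k : ℝ) := by
    rw [Matrix.mul_apply]
    have hterm : ∀ k, A i k * (U.map (Int.cast : ℤ → ℝ)) k j
        = (if k = j then (ε j : ℝ) * A i j else 0) + (n j : ℝ) * (A i k * (w k : ℝ)) := by
      intro k
      simp only [Matrix.map_apply, hU, Matrix.of_apply]
      split_ifs with h
      · subst h; push_cast; ring
      · push_cast; ring
    rw [Finset.sum_congr rfl fun k _ => hterm k, Finset.sum_add_distrib,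
      Finset.sum_ite_eq' Finset.univ j, if_pos (Finset.mem_univ j), Finset.mul_sum]
  rw [expand]
  -- the main estimate, valid whenever N ≤ n j
  have hcol : (N : ℤ) ≤ n j → 0 < (ε j : ℝ) * A i j + (n j : ℝ) * ∑ k, A i k * (w k : ℝ) := by
    intro hnj
    have h1 : (N : ℝ) ≤ (n j : ℝ) := by exact_mod_cast hnj
    have h2 := hAW i
    have h3 : -(t - 1) ≤ (ε j : ℝ) * A i j := by
      have := habs i j
      have := abs_le.mp (le_refl |A i j|)
      rcases hε1 j with h | h <;> rw [h] <;> push_cast <;>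
        cases abs_le.mp (le_refl |A i j|) <;> nlinarith [abs_nonneg (A i j), neg_abs_le (A i j), le_abs_self (A i j)]
    have h4 : (N : ℝ) * 1 ≤ (n j : ℝ) * ∑ k, A i k * (w k : ℝ) := by
      apply mul_le_mul h1 h2 zero_le_one (le_trans (by linarith) h1)
    nlinarith
  by_cases hj : j = j0
  · subst hj
    by_cases hcase : s = 0
    · -- degenerate case: w is supported on j0
      have hnj0 : n j = 0 := by simp [hn, hcase]
      have hεj0 : ε j = σ := by simp [hε, hcase]
      have hwk : ∀ k, k ≠ j → w k = 0 := by
        intro k hk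
        have := (Finset.sum_eq_zero_iff_of_nonneg (fun k _ => abs_nonneg (w k))).mp
          (hs ▸ hcase) k (Finset.mem_erase.mpr ⟨hk, Finset.mem_univ k⟩)
        exact abs_eq_zero.mp this
      have hsum1 : (1:ℝ) ≤ A i j * (w j : ℝ) := by
        have := hAW i
        rwa [Finset.sum_eq_single j (fun k _ hk => by simp [hwk k hk])
          (fun h => absurd (Finset.mem_univ j) h)] at this
      rw [hnj0, hεj0]
      push_cast
      rw [zero_mul, add_zero]
      have hwj : (w j : ℝ) ≠ 0 := Int.cast_ne_zero.mpr hj0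
      rcases lt_trichotomy (w j) 0 with h | h | h
      · have hwr : (w j : ℝ) < 0 := by exact_mod_cast h
        have : A i j < 0 := by nlinarith
        simp only [hσ, if_neg (not_lt.mpr h.le)]
        push_cast; nlinarith
      · exact absurd h hj0
      · have hwr : (0:ℝ) < (w j : ℝ) := by exact_mod_cast h
        have : 0 < A i j := by nlinarith
        simp only [hσ, if_pos h]
        push_cast; nlinarith
    · apply hcol
      have hs1 : 1 ≤ s := lt_of_le_of_ne hs0 (Ne.symm hcase)
      have hN0 : (0:ℤ) ≤ (N:ℤ) := Int.natCast_nonneg N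
      simp only [hn, if_pos rfl]
      nlinarith
  · apply hcol
    have hw1 : 1 ≤ |w j0| := Int.one_le_abs (by exact_mod_cast hj0)
    have hN0 : (0:ℤ) ≤ (N:ℤ) := Int.natCast_nonneg N
    simp only [hn, if_neg hj]
    nlinarith
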